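/- Let Q = a·z1² + 2b·z1z2 + c·z2² be a nonzero quadratic form in the skew polynomial algebra S on two generators (so (a,b,c) ≠ (0,0,0)). Then Q factors in at most two distinct ways up to scalar: if Q = L1·L2 = L3·L4 = L5·L6 in S with L1,...,L6 degree-one elements, then there exist distinct indices i, j ∈ {1,2,3} and λ ∈ k^× such that the j-th pair of factors equals (λ·L, λ⁻¹·L′), where (L, L′) is the i-th pair of factors. -/

import Mathlib

/-- In the skew polynomial algebra `S` on two generators `z1, z2` (with relation
`z2*z1 = μ*z1*z2`), the equality `Q = L·L'` for the quadratic form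
`Q = a·z1² + 2b·z1z2 + c·z2²` and degree-one elements `L = L.1·z1 + L.2·z2`,
`L' = L'.1·z1 + L'.2·z2` holds iff these coefficient equations hold. -/
def IsFactorization {k : Type*} [Field k] (μ a b c : k) (L L' : k × k) : Prop :=
  L.1 * L'.1 = a ∧ L.1 * L'.2 + μ * L.2 * L'.1 = 2 * b ∧ L.2 * L'.2 = c

lemma pigeon3 {α : Type*} (f : Fin 3 → α) (r1 r2 : α) (h : ∀ i, f i = r1 ∨ f i = r2) :
    ∃ i j : Fin 3, i ≠ j ∧ f i = f j := by
  rcases h 0 with h0|h0 <;> rcases h 1 with h1|h1 <;> rcases h 2 with h2|h2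
  all_goals first
    | exact ⟨0, 1, by decide, h0.trans h1.symm⟩
    | exact ⟨0, 2, by decide, h0.trans h2.symm⟩
    | exact ⟨1, 2, by decide, h1.trans h2.symm⟩

lemma quadRoots {k : Type*} [Field k] [IsAlgClosed k] (h2 : (2:k) ≠ 0) (S Pr : k) :
    ∃ r1 r2 : k, ∀ x : k, x^2 - S*x + Pr = 0 → x = r1 ∨ x = r2 := by
  obtain ⟨d, hd⟩ := IsAlgClosed.exists_pow_nat_eq (S^2 - 4*Pr) (n := 2) (by norm_num)
  refine ⟨(S+d)/2, (S-d)/2, fun x hx => ?_⟩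
  have h : (x - (S+d)/2) * (x - (S-d)/2) = 0 := by
    field_simp
    linear_combination 4*hx - hd
  rcases mul_eq_zero.1 h with h|h
  · left; linear_combination h
  · right; linear_combination h

lemma caseA {k : Type*} [Field k] [IsAlgClosed k]
    (h2 : (2 : k) ≠ 0) (μ : k) (hμ : μ ≠ 0) (a b c : k) (ha : a ≠ 0)
    (P : Fin 3 → (k × k) × (k × k))
    (hP : ∀ i, IsFactorization μ a b c (P i).1 (P i).2) :
    ∃ i j : Fin 3, i ≠ j ∧ ∃ lam : k, lam ≠ 0 ∧
      (P j).1 = lam • (P i).1 ∧ (P j).2 = lam⁻¹ • (P i).2 := by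
  have hp1 : ∀ i, (P i).1.1 ≠ 0 := fun i =>
    left_ne_zero_of_mul (by rw [(hP i).1]; exact ha)
  obtain ⟨r1, r2, hr⟩ := quadRoots h2 (2*b/(a*μ)) (c/(a*μ))
  obtain ⟨i, j, hij, hfij⟩ := pigeon3 (fun i => (P i).1.2 / (P i).1.1) r1 r2 (by
    intro i
    obtain ⟨e1, e2, e3⟩ := hP i
    refine hr _ ?_
    have h1 := hp1 i
    field_simp
    linear_combination ((-μ*(P i).1.2^2)*e1 + ((P i).1.1*(P i).1.2)*e2 + (-(P i).1.1^2)*e3))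
  obtain ⟨e1i, e2i, e3i⟩ := hP i
  obtain ⟨e1j, e2j, e3j⟩ := hP j
  have h1i := hp1 i; have h1j := hp1 j
  rw [div_eq_div_iff h1i h1j] at hfij
  refine ⟨i, j, hij, (P j).1.1 / (P i).1.1, div_ne_zero h1j h1i, ?_, ?_⟩
  · refine Prod.ext ?_ ?_ <;> simp only [Prod.smul_fst, Prod.smul_snd, smul_eq_mul]
    · field_simp
    · field_simp
      linear_combination -hfij
  · have key : μ * (P j).1.2 * (P j).2.1 = μ * (P i).1.2 * (P i).2.1 := by
      have h4 : (μ * (P j).1.2 * (P j).2.1) * ((P i).1.1 * (P j).1.1)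
          = (μ * (P i).1.2 * (P i).2.1) * ((P i).1.1 * (P j).1.1) := by
        linear_combination (μ*(P j).1.2*(P i).1.1)*e1j - (μ*(P i).1.2*(P j).1.1)*e1i
          - (μ*a)*hfij
      exact mul_right_cancel₀ (mul_ne_zero h1i h1j) h4
    refine Prod.ext ?_ ?_ <;> simp only [Prod.smul_fst, Prod.smul_snd, smul_eq_mul]
    · field_simp
      linear_combination e1j - e1i
    · field_simp
      linear_combination e2j - e2i - key

/-- A nonzero quadratic form on two generators factors in at most two distinct
ways up to scalar: among any three factorizations, two of them agree up to
rescaling the factors by `λ` and `λ⁻¹`. -/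
theorem atMostTwoFactorizations {k : Type*} [Field k] [IsAlgClosed k]
    (h2 : (2 : k) ≠ 0) (μ : k) (hμ : μ ≠ 0) (a b c : k)
    (hQ : (a, b, c) ≠ (0, 0, 0))
    (P : Fin 3 → (k × k) × (k × k))
    (hP : ∀ i, IsFactorization μ a b c (P i).1 (P i).2) :
    ∃ i j : Fin 3, i ≠ j ∧ ∃ lam : k, lam ≠ 0 ∧
      (P j).1 = lam • (P i).1 ∧ (P j).2 = lam⁻¹ • (P i).2 := by

  classical
  by_cases ha : a ≠ 0
  · exact caseA h2 μ hμ a b c ha P hP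
  push_neg at ha
  by_cases hc : c ≠ 0
  · set P' : Fin 3 → (k × k) × (k × k) :=
      fun i => (((P i).1.2, (P i).1.1), ((P i).2.2, (P i).2.1)) with hP'def
    have hP' : ∀ i, IsFactorization μ⁻¹ c (b/μ) a (P' i).1 (P' i).2 := by
      intro i
      obtain ⟨e1, e2, e3⟩ := hP i
      refine ⟨e3, ?_, e1⟩
      show (P i).1.2 * (P i).2.1 + μ⁻¹ * (P i).1.1 * (P i).2.2 = 2 * (b/μ)
      field_simp
      linear_combination e2
    obtain ⟨i, j, hij, lam, hlam, hL, hL'⟩ :=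
      caseA h2 μ⁻¹ (inv_ne_zero hμ) c (b/μ) a hc P' hP'
    rw [Prod.ext_iff] at hL hL'
    simp only [Prod.smul_fst, Prod.smul_snd, smul_eq_mul] at hL hL'
    refine ⟨i, j, hij, lam, hlam, ?_, ?_⟩ <;>
      · rw [Prod.ext_iff]
        simp only [Prod.smul_fst, Prod.smul_snd, smul_eq_mul]
        first
          | exact ⟨hL.2, hL.1⟩
          | exact ⟨hL'.2, hL'.1⟩
  push_neg at hc
  have hb : b ≠ 0 := fun hb => hQ (by simp [ha, hb, hc])
  have h2b : 2 * b ≠ 0 := mul_ne_zero h2 hb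
  obtain ⟨i, j, hij, hfij⟩ := pigeon3
    (fun i => if (P i).1.1 = 0 then (0:k) else 1) 0 1
    (fun i => by split_ifs <;> simp)
  obtain ⟨e1i, e2i, e3i⟩ := hP i
  obtain ⟨e1j, e2j, e3j⟩ := hP j
  rw [ha] at e1i e1j; rw [hc] at e3i e3j
  by_cases hi : (P i).1.1 = 0
  · have hj : (P j).1.1 = 0 := by
      by_contra hj
      rw [if_pos hi, if_neg hj] at hfij
      exact one_ne_zero hfij.symm
    -- here μ p2 q1 = 2b, q2 = 0 on both sides
    have hp2i : (P i).1.2 ≠ 0 := by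
      intro h; rw [hi, h] at e2i; simp at e2i; rcases e2i with h'|h'; exacts [h2 h', hb h']
    have hp2j : (P j).1.2 ≠ 0 := by
      intro h; rw [hj, h] at e2j; simp at e2j; rcases e2j with h'|h'; exacts [h2 h', hb h']
    have hq2i : (P i).2.2 = 0 := by
      rcases mul_eq_zero.1 e3i with h | h
      · exact absurd h hp2i
      · exact h
    have hq2j : (P j).2.2 = 0 := by
      rcases mul_eq_zero.1 e3j with h | h
      · exact absurd h hp2j
      · exact h
    have key : (P j).1.2 * (P j).2.1 = (P i).1.2 * (P i).2.1 := by
      refine mul_left_cancel₀ hμ ?_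
      linear_combination e2j - e2i - (P j).2.2 * hj + (P i).2.2 * hi
    refine ⟨i, j, hij, (P j).1.2 / (P i).1.2, div_ne_zero hp2j hp2i, ?_, ?_⟩ <;>
      refine Prod.ext ?_ ?_ <;> simp only [Prod.smul_fst, Prod.smul_snd, smul_eq_mul]
    · rw [hi, hj]; ring
    · field_simp
    · field_simp
      linear_combination key
    · rw [hq2i, hq2j]; ring
  · have hj : (P j).1.1 ≠ 0 := by
      intro hj
      rw [if_neg hi, if_pos hj] at hfij
      exact one_ne_zero hfij
    have hq1i : (P i).2.1 = 0 := by
      rcases mul_eq_zero.1 e1i with h | h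
      · exact absurd h hi
      · exact h
    have hq1j : (P j).2.1 = 0 := by
      rcases mul_eq_zero.1 e1j with h | h
      · exact absurd h hj
      · exact h
    have hq2i : (P i).2.2 ≠ 0 := by
      intro h; rw [hq1i, h] at e2i; simp at e2i; rcases e2i with h'|h'; exacts [h2 h', hb h']
    have hq2j : (P j).2.2 ≠ 0 := by
      intro h; rw [hq1j, h] at e2j; simp at e2j; rcases e2j with h'|h'; exacts [h2 h', hb h']
    have hp2i : (P i).1.2 = 0 := by
      rcases mul_eq_zero.1 e3i with h | h
      · exact h
      · exact absurd h hq2i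
    have hp2j : (P j).1.2 = 0 := by
      rcases mul_eq_zero.1 e3j with h | h
      · exact h
      · exact absurd h hq2j
    refine ⟨i, j, hij, (P j).1.1 / (P i).1.1, div_ne_zero hj hi, ?_, ?_⟩ <;>
      refine Prod.ext ?_ ?_ <;> simp only [Prod.smul_fst, Prod.smul_snd, smul_eq_mul]
    · field_simp
    · rw [hp2i, hp2j]; ring
    · rw [hq1i, hq1j]; ring
    · field_simp
      linear_combination e2j - e2i - μ*(P j).2.1*hp2j + μ*(P i).2.1*hp2i
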